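/- In the SCP dynamic-programming setting, suppose index j+1 exists and blk(j+1) = blk(j) + 1 (i.e., S_{j+1} is the first set of its block and a previous block exists). Then for every W ⊆ α: OPT(W, j+1, 1) = min( 2 + OPT(W \ S_{j+1}, j, flag(blk(j))), 1 + OPT(W, j, flag(blk(j))) ), where arithmetic is in ℕ ∪ {∞} with c + ∞ = ∞. -/

import Mathlib

lemma my_enat_sInf_mem {B : Set ℕ∞} (h : B.Nonempty) : sInf B ∈ B := by
  rcases eq_or_ne (sInf B) ⊤ with ht | ht
  · obtain ⟨n, hn⟩ := h
    have hn' : n = ⊤ := top_unique (ht ▸ sInf_le hn)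
    rw [ht, ← hn']; exact hn
  · have hlt : sInf B < sInf B + 1 := by rw [ENat.lt_add_one_iff ht]
    obtain ⟨a, ha, halt⟩ := sInf_lt_iff.mp hlt
    have h1 : a ≤ sInf B := (ENat.lt_add_one_iff ht).mp halt
    rwa [le_antisymm (sInf_le ha) h1]

lemma my_enat_sInf_cases (B : Set ℕ∞) : sInf B = ⊤ ∨ sInf B ∈ B := by
  rcases B.eq_empty_or_nonempty with rfl | hB
  · left; simp
  · right; exact my_enat_sInf_mem hB

/-- `OPT S blk flag W j b` in the SCP dynamic-programming setting: the infimum, over all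
index sets `X ⊆ {i : i ≤ j}` covering `W` and meeting every block `β_x` (`x ≤ blk j`)
whose (updated) flag is `2`, of `2|X|` plus the number of blocks `β_x` (`x ≤ blk j`)
with (updated) flag `1` that `X` misses; here the flag of block `blk j` is overridden
to be `b`.  The value is `∞` if no such `X` exists. -/
noncomputable def OPT {α : Type*} [DecidableEq α] {m q : ℕ}
    (S : Fin m → Finset α) (blk : Fin m → Fin q) (flag : Fin q → ℕ)
    (W : Finset α) (j : Fin m) (b : ℕ) : ℕ∞ :=
  sInf { n : ℕ∞ | ∃ X : Finset (Fin m),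
    (∀ i ∈ X, i ≤ j) ∧
    (W ⊆ X.biUnion S) ∧
    (∀ x : Fin q, x ≤ blk j → Function.update flag (blk j) b x = 2 →
      ∃ i ∈ X, blk i = x) ∧
    n = 2 * (X.card : ℕ∞) +
      ((Finset.univ.filter (fun x : Fin q =>
        x ≤ blk j ∧ Function.update flag (blk j) b x = 1 ∧
          ∀ i ∈ X, blk i ≠ x)).card : ℕ∞) }


lemma OPT_le {α : Type*} [DecidableEq α] {m q : ℕ}
    (S : Fin m → Finset α) (blk : Fin m → Fin q) (flag : Fin q → ℕ)
    (W : Finset α) (j : Fin m) (b : ℕ) (X : Finset (Fin m))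
    (h1 : ∀ i ∈ X, i ≤ j) (h2 : W ⊆ X.biUnion S)
    (h3 : ∀ x : Fin q, x ≤ blk j → Function.update flag (blk j) b x = 2 →
      ∃ i ∈ X, blk i = x) :
    OPT S blk flag W j b ≤ 2 * (X.card : ℕ∞) +
      ((Finset.univ.filter (fun x : Fin q =>
        x ≤ blk j ∧ Function.update flag (blk j) b x = 1 ∧
          ∀ i ∈ X, blk i ≠ x)).card : ℕ∞) :=
  sInf_le ⟨X, h1, h2, h3, rfl⟩

lemma OPT_ge {α : Type*} [DecidableEq α] {m q : ℕ}
    (S : Fin m → Finset α) (blk : Fin m → Fin q) (flag : Fin q → ℕ)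
    (W : Finset α) (j : Fin m) (b : ℕ) (a : ℕ∞)
    (h : ∀ X : Finset (Fin m), (∀ i ∈ X, i ≤ j) → W ⊆ X.biUnion S →
      (∀ x : Fin q, x ≤ blk j → Function.update flag (blk j) b x = 2 →
        ∃ i ∈ X, blk i = x) →
      a ≤ 2 * (X.card : ℕ∞) +
        ((Finset.univ.filter (fun x : Fin q =>
          x ≤ blk j ∧ Function.update flag (blk j) b x = 1 ∧
            ∀ i ∈ X, blk i ≠ x)).card : ℕ∞)) :
    a ≤ OPT S blk flag W j b :=
  le_sInf (by rintro n ⟨X, h1, h2, h3, rfl⟩; exact h X h1 h2 h3)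

lemma OPT_cases {α : Type*} [DecidableEq α] {m q : ℕ}
    (S : Fin m → Finset α) (blk : Fin m → Fin q) (flag : Fin q → ℕ)
    (W : Finset α) (j : Fin m) (b : ℕ) :
    OPT S blk flag W j b = ⊤ ∨ ∃ X : Finset (Fin m),
      (∀ i ∈ X, i ≤ j) ∧ (W ⊆ X.biUnion S) ∧
      (∀ x : Fin q, x ≤ blk j → Function.update flag (blk j) b x = 2 →
        ∃ i ∈ X, blk i = x) ∧
      OPT S blk flag W j b = 2 * (X.card : ℕ∞) +
        ((Finset.univ.filter (fun x : Fin q =>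
          x ≤ blk j ∧ Function.update flag (blk j) b x = 1 ∧
            ∀ i ∈ X, blk i ≠ x)).card : ℕ∞) := by
  rw [OPT]
  exact my_enat_sInf_cases _

/-- SCP recurrence when `S_{j+1}` is the first set of its block and a
previous block exists, for flag `b = 1`:
`OPT(W, j+1, 1) = min(2 + OPT(W \\ S_{j+1}, j, flag(blk j)), 1 + OPT(W, j, flag(blk j)))`. -/
theorem scp_recurrence_new_block_flag_one
    {α : Type*} [DecidableEq α] {m q : ℕ} (hm : 0 < m) (hq : 0 < q)
    (S : Fin m → Finset α) (blk : Fin m → Fin q)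
    (hmono : Monotone blk) (hsurj : Function.Surjective blk)
    (flag : Fin q → ℕ) (hflag : ∀ x, flag x ≤ 2)
    (j j' : Fin m) (hj' : (j' : ℕ) = (j : ℕ) + 1)
    (hblk : (blk j' : ℕ) = (blk j : ℕ) + 1)
    (W : Finset α) :
    OPT S blk flag W j' 1 =
      min (2 + OPT S blk flag (W \ S j') j (flag (blk j)))
        (1 + OPT S blk flag W j (flag (blk j))) := by
  classical
  have hjlt : j < j' := by rw [Fin.lt_def, hj']; exact Nat.lt_succ_self _
  have hblt : blk j < blk j' := by rw [Fin.lt_def, hblk]; exact Nat.lt_succ_self _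
  have hle2 : ∀ i : Fin m, i ≤ j' → i ≠ j' → i ≤ j := by
    intro i h hne
    rw [Fin.le_def] at h ⊢
    rw [hj'] at h
    exact Nat.lt_succ_iff.mp (lt_of_le_of_ne h (fun e => hne (Fin.ext (e.trans hj'.symm))))
  have hx4 : ∀ x : Fin q, x ≤ blk j' → x ≠ blk j' → x ≤ blk j := by
    intro x h hne
    rw [Fin.le_def] at h ⊢
    rw [hblk] at h
    exact Nat.lt_succ_iff.mp (lt_of_le_of_ne h (fun e => hne (Fin.ext (e.trans hblk.symm))))
  have hxne : ∀ x : Fin q, x ≤ blk j → x ≠ blk j' :=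
    fun x h => ne_of_lt (lt_of_le_of_lt h hblt)
  have hij' : ∀ i : Fin m, i ≤ j → blk i ≠ blk j' :=
    fun i h => ne_of_lt (lt_of_le_of_lt (hmono h) hblt)
  have hupd : Function.update flag (blk j) (flag (blk j)) = flag :=
    Function.update_eq_self _ _
  -- filter identities
  have hfilt1 : ∀ X : Finset (Fin m), (∀ i ∈ X, i ≤ j) →
      (Finset.univ.filter (fun x : Fin q => x ≤ blk j' ∧
        Function.update flag (blk j') 1 x = 1 ∧ ∀ i ∈ insert j' X, blk i ≠ x))
      = Finset.univ.filter (fun x : Fin q =>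
          x ≤ blk j ∧ flag x = 1 ∧ ∀ i ∈ X, blk i ≠ x) := by
    intro X hX
    apply Finset.filter_congr
    intro x _
    constructor
    · rintro ⟨hxle, hx1, hall⟩
      have hne : x ≠ blk j' := (hall j' (Finset.mem_insert_self _ _)).symm
      exact ⟨hx4 x hxle hne, by rwa [Function.update_of_ne hne] at hx1,
        fun i hi => hall i (Finset.mem_insert_of_mem hi)⟩
    · rintro ⟨hxle, hx1, hall⟩
      have hne := hxne x hxle
      refine ⟨le_trans hxle (le_of_lt hblt), by rwa [Function.update_of_ne hne], ?_⟩
      intro i hi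
      rcases Finset.mem_insert.mp hi with rfl | hi'
      · exact hne.symm
      · exact hall i hi'
  have hfilt2 : ∀ X : Finset (Fin m), (∀ i ∈ X, i ≤ j) →
      (Finset.univ.filter (fun x : Fin q => x ≤ blk j' ∧
        Function.update flag (blk j') 1 x = 1 ∧ ∀ i ∈ X, blk i ≠ x))
      = insert (blk j') (Finset.univ.filter (fun x : Fin q =>
          x ≤ blk j ∧ flag x = 1 ∧ ∀ i ∈ X, blk i ≠ x)) := by
    intro X hX
    ext x
    simp only [Finset.mem_filter, Finset.mem_insert, Finset.mem_univ, true_and]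
    constructor
    · rintro ⟨hxle, hx1, hall⟩
      rcases eq_or_ne x (blk j') with rfl | hne
      · exact Or.inl rfl
      · exact Or.inr ⟨hx4 x hxle hne,
          by rwa [Function.update_of_ne hne] at hx1, hall⟩
    · rintro (rfl | ⟨hxle, hx1, hall⟩)
      · exact ⟨le_refl _, Function.update_self _ _ _,
          fun i hi => hij' i (hX i hi)⟩
      · exact ⟨le_trans hxle (le_of_lt hblt),
          by rwa [Function.update_of_ne (hxne x hxle)], hall⟩
  have hnotmem : ∀ X : Finset (Fin m),
      blk j' ∉ Finset.univ.filter (fun x : Fin q =>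
        x ≤ blk j ∧ flag x = 1 ∧ ∀ i ∈ X, blk i ≠ x) := by
    intro X h
    exact absurd (Finset.mem_filter.mp h).2.1 (not_le.mpr hblt)
  refine le_antisymm (le_min ?_ ?_) ?_
  · -- OPT' ≤ 2 + OPT₀
    rcases OPT_cases S blk flag (W \ S j') j (flag (blk j)) with h | ⟨X₀, hX₀le, hX₀cov, hX₀meet, hX₀val⟩
    · rw [h]; simp
    · simp only [hupd] at hX₀meet hX₀val
      have hj'X₀ : j' ∉ X₀ := fun h => absurd (hX₀le j' h) (not_le.mpr hjlt)
      have hb := OPT_le S blk flag W j' 1 (insert j' X₀) ?_ ?_ ?_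
      · refine le_trans hb (le_of_eq ?_)
        rw [hfilt1 X₀ hX₀le, Finset.card_insert_of_notMem hj'X₀, hX₀val]
        push_cast
        ring
      · intro i hi
        rcases Finset.mem_insert.mp hi with rfl | hi'
        · exact le_refl _
        · exact le_trans (hX₀le i hi') (le_of_lt hjlt)
      · intro w hw
        by_cases hwS : w ∈ S j'
        · exact Finset.mem_biUnion.mpr ⟨j', Finset.mem_insert_self _ _, hwS⟩
        · obtain ⟨i, hi, hwi⟩ := Finset.mem_biUnion.mp
            (hX₀cov (Finset.mem_sdiff.mpr ⟨hw, hwS⟩))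
          exact Finset.mem_biUnion.mpr ⟨i, Finset.mem_insert_of_mem hi, hwi⟩
      · intro x hx h2
        have hne : x ≠ blk j' := by
          rintro rfl
          rw [Function.update_self] at h2
          omega
        rw [Function.update_of_ne hne] at h2
        obtain ⟨i, hi, hbi⟩ := hX₀meet x (hx4 x hx hne) h2
        exact ⟨i, Finset.mem_insert_of_mem hi, hbi⟩
  · -- OPT' ≤ 1 + OPT₁
    rcases OPT_cases S blk flag W j (flag (blk j)) with h | ⟨X₁, hX₁le, hX₁cov, hX₁meet, hX₁val⟩
    · rw [h]; simp
    · simp only [hupd] at hX₁meet hX₁val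
      have hb := OPT_le S blk flag W j' 1 X₁ ?_ ?_ ?_
      · refine le_trans hb (le_of_eq ?_)
        rw [hfilt2 X₁ hX₁le, Finset.card_insert_of_notMem (hnotmem X₁), hX₁val]
        push_cast
        ring
      · exact fun i hi => le_trans (hX₁le i hi) (le_of_lt hjlt)
      · exact hX₁cov
      · intro x hx h2
        have hne : x ≠ blk j' := by
          rintro rfl
          rw [Function.update_self] at h2
          omega
        rw [Function.update_of_ne hne] at h2
        exact hX₁meet x (hx4 x hx hne) h2
  · -- min ≤ OPT'
    apply OPT_ge
    intro X hle hcov hmeet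
    by_cases hj'X : j' ∈ X
    · refine le_trans (min_le_left _ _) ?_
      set X' := X.erase j' with hX'
      have hX'le : ∀ i ∈ X', i ≤ j := by
        intro i hi
        exact hle2 i (hle i (Finset.mem_of_mem_erase hi)) (Finset.ne_of_mem_erase hi)
      have hb := OPT_le S blk flag (W \ S j') j (flag (blk j)) X' hX'le ?_ ?_
      · simp only [hupd] at hb
        refine le_trans (add_le_add_right hb 2) (le_of_eq ?_)
        have hXi : X = insert j' X' := (Finset.insert_erase hj'X).symm
        have hcard : X.card = X'.card + 1 := by
          rw [hXi, Finset.card_insert_of_notMem (Finset.notMem_erase _ _)]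
        rw [hcard]
        conv_rhs => rw [hXi, hfilt1 X' hX'le]
        push_cast
        ring
      · intro w hw
        obtain ⟨hwW, hwS⟩ := Finset.mem_sdiff.mp hw
        obtain ⟨i, hi, hwi⟩ := Finset.mem_biUnion.mp (hcov hwW)
        have hne : i ≠ j' := by rintro rfl; exact hwS hwi
        exact Finset.mem_biUnion.mpr ⟨i, Finset.mem_erase.mpr ⟨hne, hi⟩, hwi⟩
      · intro x hx h2
        rw [hupd] at h2
        have hne := hxne x hx
        obtain ⟨i, hi, hbi⟩ := hmeet x (le_trans hx (le_of_lt hblt))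
          (by rwa [Function.update_of_ne hne])
        have hine : i ≠ j' := by rintro rfl; exact hne hbi.symm
        exact ⟨i, Finset.mem_erase.mpr ⟨hine, hi⟩, hbi⟩
    · refine le_trans (min_le_right _ _) ?_
      have hXle : ∀ i ∈ X, i ≤ j := fun i hi =>
        hle2 i (hle i hi) (fun e => hj'X (e ▸ hi))
      have hb := OPT_le S blk flag W j (flag (blk j)) X hXle hcov ?_
      · simp only [hupd] at hb
        refine le_trans (add_le_add_right hb 1) (le_of_eq ?_)
        rw [hfilt2 X hXle, Finset.card_insert_of_notMem (hnotmem X)]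
        push_cast
        ring
      · intro x hx h2
        rw [hupd] at h2
        have hne := hxne x hx
        exact hmeet x (le_trans hx (le_of_lt hblt))
          (by rwa [Function.update_of_ne hne])
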